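/- Define F₁(x₁,x₂,x₃) = ((x₂ + x₃² + x₂² x₃)/x₁, x₂, x₃), F₂(x₁,x₂,x₃) = (x₁, (x₁ + x₃)/x₂, x₃), F₃(x₁,x₂,x₃) = (x₁, x₂, (x₂ + x₁² + x₂² x₁)/x₃). Then any finite composition F_{i₁} ∘ F_{i₂} ∘ ⋯ ∘ F_{i_m} maps (x₁,x₂,x₃) to a triple (G₁,G₂,G₃) of Laurent polynomials in x₁, x₂, x₃ with integer coefficients. -/

import Mathlib

set_option linter.unusedSectionVars false

open MvPolynomial

section Aux

variable {F : Type*} [Field F] [Algebra (MvPolynomial (Fin 3) ℤ) F]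
  [IsFractionRing (MvPolynomial (Fin 3) ℤ) F]

/-- "Positive at (1,1,1)": z = p/q with eval₁(p)·eval₁(q) > 0. -/
def PosAt (z : F) : Prop :=
  ∃ p q : MvPolynomial (Fin 3) ℤ,
    z * algebraMap (MvPolynomial (Fin 3) ℤ) F q = algebraMap (MvPolynomial (Fin 3) ℤ) F p ∧
    0 < (eval (fun _ => (1:ℤ)) p) * (eval (fun _ => (1:ℤ)) q)

theorem posAt_ne_zero {z : F} (h : PosAt z) : z ≠ 0 := by
  obtain ⟨p, q, he, hp⟩ := h
  intro h0
  rw [h0, zero_mul] at he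
  have hp0 : p = 0 := by
    have := IsFractionRing.injective (MvPolynomial (Fin 3) ℤ) F
    exact (map_eq_zero_iff _ this).1 he.symm
  rw [hp0] at hp; simp at hp

theorem posAt_add {y z : F} (hy : PosAt y) (hz : PosAt z) : PosAt (y + z) := by
  obtain ⟨p1, q1, e1, h1⟩ := hy
  obtain ⟨p2, q2, e2, h2⟩ := hz
  refine ⟨p1 * q2 + p2 * q1, q1 * q2, ?_, ?_⟩
  · push_cast [map_add, map_mul]
    linear_combination algebraMap (MvPolynomial (Fin 3) ℤ) F q2 * e1 +
      algebraMap (MvPolynomial (Fin 3) ℤ) F q1 * e2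
  · simp only [map_add, map_mul]
    set a := eval (fun _ => (1:ℤ)) p1
    set b := eval (fun _ => (1:ℤ)) q1
    set c := eval (fun _ => (1:ℤ)) p2
    set d := eval (fun _ => (1:ℤ)) q2
    have hb : b ≠ 0 := by intro h; rw [h, mul_zero] at h1; exact lt_irrefl 0 h1
    have hd : d ≠ 0 := by intro h; rw [h, mul_zero] at h2; exact lt_irrefl 0 h2
    nlinarith [mul_pos h1 (mul_self_pos.2 hd), mul_pos h2 (mul_self_pos.2 hb)]

theorem posAt_mul {y z : F} (hy : PosAt y) (hz : PosAt z) : PosAt (y * z) := by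
  obtain ⟨p1, q1, e1, h1⟩ := hy
  obtain ⟨p2, q2, e2, h2⟩ := hz
  refine ⟨p1 * p2, q1 * q2, ?_, ?_⟩
  · push_cast [map_mul]
    linear_combination (z * algebraMap (MvPolynomial (Fin 3) ℤ) F q2) * e1 +
      algebraMap (MvPolynomial (Fin 3) ℤ) F p1 * e2
  · simp only [map_mul]
    nlinarith [mul_pos h1 h2]

theorem posAt_div {y z : F} (hy : PosAt y) (hz : PosAt z) : PosAt (y / z) := by
  have hz0 : z ≠ 0 := posAt_ne_zero hz
  obtain ⟨p1, q1, e1, h1⟩ := hy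
  obtain ⟨p2, q2, e2, h2⟩ := hz
  have hq1 : (q1 : MvPolynomial (Fin 3) ℤ) ≠ 0 := by rintro rfl; simp at h1
  have hq2 : (q2 : MvPolynomial (Fin 3) ℤ) ≠ 0 := by rintro rfl; simp at h2
  have inj := IsFractionRing.injective (MvPolynomial (Fin 3) ℤ) F
  have haq1 : algebraMap (MvPolynomial (Fin 3) ℤ) F q1 ≠ 0 := by
    simpa [map_eq_zero_iff _ inj] using hq1
  have haq2 : algebraMap (MvPolynomial (Fin 3) ℤ) F q2 ≠ 0 := by
    simpa [map_eq_zero_iff _ inj] using hq2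
  refine ⟨p1 * q2, q1 * p2, ?_, ?_⟩
  · push_cast [map_mul]
    field_simp
    linear_combination (z * algebraMap (MvPolynomial (Fin 3) ℤ) F q2) * e1 -
      y * algebraMap (MvPolynomial (Fin 3) ℤ) F q1 * e2
  · simp only [map_mul]
    nlinarith [mul_pos h1 h2]

theorem posAt_sq {z : F} (hz : PosAt z) : PosAt (z ^ 2) := by
  rw [sq]; exact posAt_mul hz hz

end Aux

section Steps
variable {F : Type*} [Field F]

theorem stepA_val {K a b c : F} (ha : a ≠ 0)
    (hK : K * (a * b * c) = (a + c) ^ 2 + b * (1 + a * b + b * c)) :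
    (b + c ^ 2 + b ^ 2 * c) / a = K * b * c - a - 2 * c - b ^ 2 := by
  field_simp
  linear_combination -hK

theorem stepA_K {K a b c : F}
    (hK : K * (a * b * c) = (a + c) ^ 2 + b * (1 + a * b + b * c)) :
    K * ((K * b * c - a - 2 * c - b ^ 2) * b * c) =
      ((K * b * c - a - 2 * c - b ^ 2) + c) ^ 2 +
        b * (1 + (K * b * c - a - 2 * c - b ^ 2) * b + b * c) := by
  linear_combination hK

theorem stepC_val {K a b c : F} (hc : c ≠ 0)
    (hK : K * (a * b * c) = (a + c) ^ 2 + b * (1 + a * b + b * c)) :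
    (b + a ^ 2 + b ^ 2 * a) / c = K * a * b - c - 2 * a - b ^ 2 := by
  field_simp
  linear_combination -hK

theorem stepC_K {K a b c : F}
    (hK : K * (a * b * c) = (a + c) ^ 2 + b * (1 + a * b + b * c)) :
    K * (a * b * (K * a * b - c - 2 * a - b ^ 2)) =
      (a + (K * a * b - c - 2 * a - b ^ 2)) ^ 2 +
        b * (1 + a * b + b * (K * a * b - c - 2 * a - b ^ 2)) := by
  linear_combination hK

theorem stepB_K {K a b c t : F} (hb : b ≠ 0) (ht : a + c = b * t)
    (hK : K * (a * b * c) = (a + c) ^ 2 + b * (1 + a * b + b * c)) :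
    K * (a * t * c) = (a + c) ^ 2 + t * (1 + a * t + t * c) := by
  apply mul_left_cancel₀ (pow_ne_zero 2 hb)
  linear_combination (a + c) * hK +
    ((a * b + b * c) * t + (b + a ^ 2 + 2 * a * c + c ^ 2 - K * a * b * c)) * ht

end Steps

/-- The Laurent phenomenon for compositions of the three birational maps
F₁ : x₁ ↦ (x₂ + x₃² + x₂²x₃)/x₁,  F₂ : x₂ ↦ (x₁ + x₃)/x₂,
F₃ : x₃ ↦ (x₂ + x₁² + x₂²x₁)/x₃. -/
theorem rank3_trinomial_laurent
    (F : Type*) [Field F] [Algebra (MvPolynomial (Fin 3) ℤ) F]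
    [IsFractionRing (MvPolynomial (Fin 3) ℤ) F]
    (x : Fin 3 → F) (hx : ∀ i, x i = algebraMap (MvPolynomial (Fin 3) ℤ) F (X i))
    (step : Fin 3 → (F × F × F) → (F × F × F))
    (hstep1 : ∀ v : F × F × F,
      step 0 v = ((v.2.1 + v.2.2 ^ 2 + v.2.1 ^ 2 * v.2.2) / v.1, v.2.1, v.2.2))
    (hstep2 : ∀ v : F × F × F,
      step 1 v = (v.1, (v.1 + v.2.2) / v.2.1, v.2.2))
    (hstep3 : ∀ v : F × F × F,
      step 2 v = (v.1, v.2.1, (v.2.1 + v.1 ^ 2 + v.2.1 ^ 2 * v.1) / v.2.2)) :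
    ∀ l : List (Fin 3),
      (l.foldr step (x 0, x 1, x 2)).1 ∈ Algebra.adjoin ℤ
        (Set.range x ∪ Set.range (fun i => (x i)⁻¹)) ∧
      (l.foldr step (x 0, x 1, x 2)).2.1 ∈ Algebra.adjoin ℤ
        (Set.range x ∪ Set.range (fun i => (x i)⁻¹)) ∧
      (l.foldr step (x 0, x 1, x 2)).2.2 ∈ Algebra.adjoin ℤ
        (Set.range x ∪ Set.range (fun i => (x i)⁻¹)) := by
  set A := Algebra.adjoin ℤ (Set.range x ∪ Set.range (fun i => (x i)⁻¹)) with hA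
  have hxA : ∀ i, x i ∈ A := fun i => Algebra.subset_adjoin (Or.inl ⟨i, rfl⟩)
  have hxiA : ∀ i, (x i)⁻¹ ∈ A := fun i => Algebra.subset_adjoin (Or.inr ⟨i, rfl⟩)
  have hxpos : ∀ i, PosAt (x i) := fun i =>
    ⟨X i, 1, by rw [hx i]; simp, by simp⟩
  have hxne : ∀ i, x i ≠ 0 := fun i => posAt_ne_zero (hxpos i)
  set K₀ : F := ((x 0 + x 2) ^ 2 + x 1 * (1 + x 0 * x 1 + x 1 * x 2)) *
      ((x 0)⁻¹ * ((x 1)⁻¹ * (x 2)⁻¹)) with hK₀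
  have hKA : K₀ ∈ A := by
    apply mul_mem
    · exact add_mem (pow_mem (add_mem (hxA 0) (hxA 2)) 2)
        (mul_mem (hxA 1) (add_mem (add_mem (one_mem A)
          (mul_mem (hxA 0) (hxA 1))) (mul_mem (hxA 1) (hxA 2))))
    · exact mul_mem (hxiA 0) (mul_mem (hxiA 1) (hxiA 2))
  suffices H : ∀ l : List (Fin 3),
      (l.foldr step (x 0, x 1, x 2)).1 ∈ A ∧
      (l.foldr step (x 0, x 1, x 2)).2.1 ∈ A ∧
      (l.foldr step (x 0, x 1, x 2)).2.2 ∈ A ∧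
      PosAt (l.foldr step (x 0, x 1, x 2)).1 ∧
      PosAt (l.foldr step (x 0, x 1, x 2)).2.1 ∧
      PosAt (l.foldr step (x 0, x 1, x 2)).2.2 ∧
      (∃ t ∈ A, (l.foldr step (x 0, x 1, x 2)).1 + (l.foldr step (x 0, x 1, x 2)).2.2
        = (l.foldr step (x 0, x 1, x 2)).2.1 * t) ∧
      K₀ * ((l.foldr step (x 0, x 1, x 2)).1 * (l.foldr step (x 0, x 1, x 2)).2.1 *
          (l.foldr step (x 0, x 1, x 2)).2.2) =
        ((l.foldr step (x 0, x 1, x 2)).1 + (l.foldr step (x 0, x 1, x 2)).2.2) ^ 2 +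
          (l.foldr step (x 0, x 1, x 2)).2.1 *
            (1 + (l.foldr step (x 0, x 1, x 2)).1 * (l.foldr step (x 0, x 1, x 2)).2.1 +
              (l.foldr step (x 0, x 1, x 2)).2.1 * (l.foldr step (x 0, x 1, x 2)).2.2) by
    intro l
    obtain ⟨h1, h2, h3, -⟩ := H l
    exact ⟨h1, h2, h3⟩
  intro l
  induction l with
  | nil =>
    refine ⟨hxA 0, hxA 1, hxA 2, hxpos 0, hxpos 1, hxpos 2,
      ⟨(x 0 + x 2) * (x 1)⁻¹, mul_mem (add_mem (hxA 0) (hxA 2)) (hxiA 1), ?_⟩, ?_⟩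
    · simp only [List.foldr_nil]
      rw [mul_comm (x 0 + x 2) (x 1)⁻¹, ← mul_assoc, mul_inv_cancel₀ (hxne 1), one_mul]
    · have h0 := hxne 0
      have h1 := hxne 1
      have h2 := hxne 2
      simp only [List.foldr_nil]
      rw [hK₀, mul_assoc,
        show (x 0)⁻¹ * ((x 1)⁻¹ * (x 2)⁻¹) * (x 0 * x 1 * x 2) = 1 from by field_simp,
        mul_one]
  | cons i l ih =>
    simp only [List.foldr_cons]
    set v := l.foldr step (x 0, x 1, x 2) with hv
    obtain ⟨hA1, hA2, hA3, hp1, hp2, hp3, ⟨t, htA, htEq⟩, hK⟩ := ih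
    have ha := posAt_ne_zero hp1
    have hb := posAt_ne_zero hp2
    have hc := posAt_ne_zero hp3
    have h2A : ∀ z : F, z ∈ A → 2 * z ∈ A := by
      intro z hz; rw [two_mul]; exact add_mem hz hz
    have hi : i = 0 ∨ i = 1 ∨ i = 2 := by omega
    rcases hi with rfl | rfl | rfl
    · -- F₁
      rw [hstep1 v]
      have hval := stepA_val (K := K₀) (a := v.1) (b := v.2.1) (c := v.2.2) ha hK
      refine ⟨?_, hA2, hA3, ?_, hp2, hp3, ⟨K₀ * v.2.2 - t - v.2.1,
        sub_mem (sub_mem (mul_mem hKA hA3) htA) hA2, ?_⟩, ?_⟩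
      · show (v.2.1 + v.2.2 ^ 2 + v.2.1 ^ 2 * v.2.2) / v.1 ∈ A
        rw [hval]
        exact sub_mem (sub_mem (sub_mem (mul_mem (mul_mem hKA hA2) hA3) hA1)
          (h2A _ hA3)) (pow_mem hA2 2)
      · exact posAt_div (posAt_add (posAt_add hp2 (posAt_sq hp3))
          (posAt_mul (posAt_sq hp2) hp3)) hp1
      · show (v.2.1 + v.2.2 ^ 2 + v.2.1 ^ 2 * v.2.2) / v.1 + v.2.2
          = v.2.1 * (K₀ * v.2.2 - t - v.2.1)
        rw [hval]
        linear_combination -htEq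
      · show K₀ * ((v.2.1 + v.2.2 ^ 2 + v.2.1 ^ 2 * v.2.2) / v.1 * v.2.1 * v.2.2)
          = ((v.2.1 + v.2.2 ^ 2 + v.2.1 ^ 2 * v.2.2) / v.1 + v.2.2) ^ 2 + v.2.1 *
            (1 + (v.2.1 + v.2.2 ^ 2 + v.2.1 ^ 2 * v.2.2) / v.1 * v.2.1 + v.2.1 * v.2.2)
        rw [hval]
        exact stepA_K hK
    · -- F₂
      rw [hstep2 v]
      have hbt : (v.1 + v.2.2) / v.2.1 = t := by
        field_simp
        linear_combination htEq
      refine ⟨hA1, ?_, hA3, hp1, ?_, hp3, ⟨v.2.1, hA2, ?_⟩, ?_⟩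
      · show (v.1 + v.2.2) / v.2.1 ∈ A
        rw [hbt]; exact htA
      · exact posAt_div (posAt_add hp1 hp3) hp2
      · show v.1 + v.2.2 = (v.1 + v.2.2) / v.2.1 * v.2.1
        rw [hbt]
        linear_combination htEq
      · show K₀ * (v.1 * ((v.1 + v.2.2) / v.2.1) * v.2.2)
          = (v.1 + v.2.2) ^ 2 + (v.1 + v.2.2) / v.2.1 *
            (1 + v.1 * ((v.1 + v.2.2) / v.2.1) + (v.1 + v.2.2) / v.2.1 * v.2.2)
        rw [hbt]
        exact stepB_K hb htEq hK
    · -- F₃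
      rw [hstep3 v]
      have hval := stepC_val (K := K₀) (a := v.1) (b := v.2.1) (c := v.2.2) hc hK
      refine ⟨hA1, hA2, ?_, hp1, hp2, ?_, ⟨K₀ * v.1 - t - v.2.1,
        sub_mem (sub_mem (mul_mem hKA hA1) htA) hA2, ?_⟩, ?_⟩
      · show (v.2.1 + v.1 ^ 2 + v.2.1 ^ 2 * v.1) / v.2.2 ∈ A
        rw [hval]
        exact sub_mem (sub_mem (sub_mem (mul_mem (mul_mem hKA hA1) hA2) hA3)
          (h2A _ hA1)) (pow_mem hA2 2)
      · exact posAt_div (posAt_add (posAt_add hp2 (posAt_sq hp1))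
          (posAt_mul (posAt_sq hp2) hp1)) hp3
      · show v.1 + (v.2.1 + v.1 ^ 2 + v.2.1 ^ 2 * v.1) / v.2.2
          = v.2.1 * (K₀ * v.1 - t - v.2.1)
        rw [hval]
        linear_combination -htEq
      · show K₀ * (v.1 * v.2.1 * ((v.2.1 + v.1 ^ 2 + v.2.1 ^ 2 * v.1) / v.2.2))
          = (v.1 + (v.2.1 + v.1 ^ 2 + v.2.1 ^ 2 * v.1) / v.2.2) ^ 2 + v.2.1 *
            (1 + v.1 * v.2.1 + v.2.1 * ((v.2.1 + v.1 ^ 2 + v.2.1 ^ 2 * v.1) / v.2.2))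
        rw [hval]
        exact stepC_K hK
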